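/- Let A ∈ ℝ^{N×N} be symmetric negative semidefinite, B ∈ ℝ^{N×N} symmetric positive definite, and S ∈ ℝ^{N×K}. For every z ∈ ℂ with Im z > 0, the Hermitian matrix i·(F(z) − F(z)ᴴ) is positive semidefinite, where F(z) = Sᵀ(A + zB)⁻¹S; equivalently, the imaginary part of −F(z) is positive semidefinite. -/

import Mathlib

open Matrix
open scoped ComplexOrder

private lemma map_ofReal_posSemidef {N : ℕ} {B : Matrix (Fin N) (Fin N) ℝ}
    (hB : B.PosSemidef) : (B.map Complex.ofReal).PosSemidef := by
  obtain ⟨L, rfl⟩ : ∃ L : Matrix (Fin N) (Fin N) ℝ, B = Lᴴ * L := by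
    open scoped MatrixOrder in
    exact ⟨CFC.sqrt B, by
      rw [show (CFC.sqrt B)ᴴ = CFC.sqrt B from (CFC.sqrt_nonneg B).isSelfAdjoint.star_eq,
        CFC.sqrt_mul_sqrt_self B hB.nonneg]⟩
  have hmap : (Lᴴ * L).map Complex.ofReal
      = (L.map Complex.ofReal)ᴴ * (L.map Complex.ofReal) := by
    ext i j
    simp [Matrix.mul_apply, Matrix.map_apply, Matrix.conjTranspose_apply,
      Complex.conj_ofReal, Complex.ofReal_sum, Complex.ofReal_mul]
  rw [hmap]
  exact Matrix.posSemidef_conjTranspose_mul_self _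

private lemma smul_posSemidef {K : ℕ} {P : Matrix (Fin K) (Fin K) ℂ}
    (hP : P.PosSemidef) {c : ℝ} (hc : 0 ≤ c) : ((c : ℂ) • P).PosSemidef := by
  refine Matrix.PosSemidef.of_dotProduct_mulVec_nonneg ?_ ?_
  · rw [Matrix.IsHermitian, Matrix.conjTranspose_smul, hP.1.eq, Complex.star_def,
      Complex.conj_ofReal]
  · intro x
    rw [Matrix.smul_mulVec, dotProduct_smul, smul_eq_mul]
    exact mul_nonneg (by exact_mod_cast hc) (hP.dotProduct_mulVec_nonneg x)

theorem stmt8 {N K : ℕ} (A B : Matrix (Fin N) (Fin N) ℝ) (S : Matrix (Fin N) (Fin K) ℝ)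
    (hA : A.IsSymm) (hAneg : ∀ x : Fin N → ℝ, x ⬝ᵥ A.mulVec x ≤ 0)
    (hB : B.PosDef)
    (z : ℂ) (hz : 0 < z.im)
    (F : Matrix (Fin K) (Fin K) ℂ)
    (hF : F = (S.map Complex.ofReal)ᵀ *
      (A.map Complex.ofReal + z • B.map Complex.ofReal)⁻¹ * S.map Complex.ofReal) :
    (Complex.I • (F - Fᴴ)).PosSemidef := by
  set A' : Matrix (Fin N) (Fin N) ℂ := A.map Complex.ofReal with hA'
  set B' : Matrix (Fin N) (Fin N) ℂ := B.map Complex.ofReal with hB'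
  set S' : Matrix (Fin N) (Fin K) ℂ := S.map Complex.ofReal with hS'
  set M : Matrix (Fin N) (Fin N) ℂ := A' + z • B' with hM
  -- basic facts
  have hA'herm : A'.IsHermitian := by
    ext i j
    simp only [hA', Matrix.conjTranspose_apply, Matrix.map_apply, Complex.star_def,
      Complex.conj_ofReal, Complex.ofReal_inj]
    exact congrFun (congrFun hA i) j
  have hB'psd : B'.PosSemidef := map_ofReal_posSemidef hB.posSemidef
  have hB'herm : B'.IsHermitian := hB'psd.1
  have hB'det : B'.det ≠ 0 := by
    have : B'.det = Complex.ofRealHom B.det := (RingHom.map_det Complex.ofRealHom B).symm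
    rw [this]
    simpa using hB.det_pos.ne'
  -- M is invertible
  have hMdet : IsUnit M.det := by
    rw [isUnit_iff_ne_zero]
    intro hdet
    obtain ⟨v, hv0, hv⟩ := (Matrix.exists_mulVec_eq_zero_iff).mpr hdet
    have hq : star v ⬝ᵥ (A'.mulVec v) + z * (star v ⬝ᵥ (B'.mulVec v)) = 0 := by
      have := congrArg (fun w => star v ⬝ᵥ w) hv
      simpa [hM, Matrix.add_mulVec, Matrix.smul_mulVec, dotProduct_add,
        dotProduct_smul, smul_eq_mul] using this
    set a := star v ⬝ᵥ (A'.mulVec v) with ha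
    set b := star v ⬝ᵥ (B'.mulVec v) with hb
    have hbnn : 0 ≤ b := hB'psd.dotProduct_mulVec_nonneg v
    have hbre : b = (b.re : ℂ) ∧ 0 ≤ b.re := by
      rw [Complex.nonneg_iff] at hbnn
      exact ⟨Complex.ext rfl (by simp [hbnn.2.symm]), hbnn.1⟩
    have hstar : star a = a := by
      calc star a = star (A'.mulVec v) ⬝ᵥ v := by
            rw [ha, Matrix.star_dotProduct, star_star]
        _ = star v ᵥ* A'ᴴ ⬝ᵥ v := by rw [Matrix.star_mulVec]
        _ = star v ⬝ᵥ A'.mulVec v := by rw [hA'herm.eq, ← Matrix.dotProduct_mulVec]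
        _ = a := ha.symm
    have haim : a.im = 0 := by
      have := congrArg Complex.im hstar
      simp only [Complex.star_def, Complex.conj_im] at this
      linarith
    have him := congrArg Complex.im hq
    rw [Complex.add_im, Complex.mul_im, haim] at him
    rw [hbre.1] at him
    simp only [Complex.ofReal_re, Complex.ofReal_im, mul_zero, zero_add,
      Complex.zero_im] at him
    have hbre0 : b.re = 0 := by
      rcases mul_eq_zero.mp him with h | h
      · linarith [hz]
      · exact h
    have hb0 : star v ⬝ᵥ (B'.mulVec v) = 0 := by rw [← hb, hbre.1, hbre0]; simp
    have hBv : B'.mulVec v = 0 := (hB'psd.dotProduct_mulVec_zero_iff v).mp hb0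
    exact hB'det (Matrix.exists_mulVec_eq_zero_iff.mp ⟨v, hv0, hBv⟩)
  have hMinv : M⁻¹ * M = 1 := Matrix.nonsing_inv_mul M hMdet
  set G := M⁻¹ with hG
  -- conjugate transpose facts
  have hMH : Mᴴ = A' + (starRingEnd ℂ z) • B' := by
    rw [hM, Matrix.conjTranspose_add, Matrix.conjTranspose_smul, hA'herm.eq, hB'herm.eq]
    rfl
  have hS'T : S'ᴴ = S'ᵀ := by
    ext i j
    simp [hS', Matrix.conjTranspose_apply, Matrix.map_apply, Complex.conj_ofReal]
  have hS'H : (S'ᵀ)ᴴ = S' := by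
    ext i j
    simp [hS', Matrix.conjTranspose_apply, Matrix.map_apply, Complex.conj_ofReal]
  -- Fᴴ
  have hFH : Fᴴ = S'ᵀ * Gᴴ * S' := by
    rw [hF, Matrix.conjTranspose_mul, Matrix.conjTranspose_mul, hS'T, hS'H,
      ← Matrix.mul_assoc]
  -- G - Gᴴ = G (Mᴴ - M) Gᴴ
  have h1 : G * Mᴴ * Gᴴ = G := by
    calc G * Mᴴ * Gᴴ = G * (G * M)ᴴ := by
          rw [Matrix.conjTranspose_mul, Matrix.mul_assoc]
      _ = G := by rw [hMinv, Matrix.conjTranspose_one, Matrix.mul_one]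
  have h2 : G * M * Gᴴ = Gᴴ := by rw [hMinv, Matrix.one_mul]
  have hGsub : G - Gᴴ = G * (Mᴴ - M) * Gᴴ := by
    rw [Matrix.mul_sub, Matrix.sub_mul, h1, h2]
  have hMHsub : Mᴴ - M = ((starRingEnd ℂ z) - z) • B' := by
    rw [hMH, hM, sub_smul]
    abel
  have hd : Complex.I * ((starRingEnd ℂ z) - z) = ((2 * z.im : ℝ) : ℂ) := by
    apply Complex.ext <;> simp [Complex.mul_re, Complex.mul_im] <;> ring
  -- key identity
  have key : Complex.I • (F - Fᴴ)
      = ((2 * z.im : ℝ) : ℂ) • ((Gᴴ * S')ᴴ * B' * (Gᴴ * S')) := by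
    rw [hFH, hF, ← Matrix.sub_mul, ← Matrix.mul_sub, hGsub, hMHsub]
    rw [Matrix.conjTranspose_mul, Matrix.conjTranspose_conjTranspose, hS'T]
    rw [← hd]
    simp only [Matrix.mul_smul, Matrix.smul_mul, smul_smul, Matrix.mul_assoc]
  rw [key]
  exact smul_posSemidef (hB'psd.conjTranspose_mul_mul_same _) (by positivity)
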